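/- Let p be an odd prime and let 0 = m_0 < m_1 < ... < m_r (r ≥ 1) be nonnegative integers. Then there exists a finite-dimensional 2-step nilpotent Lie algebra over the finite field F_p of breadth type (m_0, m_1, ..., m_r). -/

import Mathlib

/- Common definitions: breadth, breadth type, derived subalgebra, Camina Lie algebras,
nilpotency class, minimal generation, and free nilpotent Lie algebras. -/

open Module

section Defs

variable (k : Type*) [Field k]

/-- The breadth of an element `x` of a Lie algebra: the rank of the adjoint map `ad x`
(equivalently, the codimension of the centralizer of `x`). -/
noncomputable def breadth (L : Type*) [LieRing L] [LieAlgebra k L] (x : L) : ℕ :=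
  Module.finrank k (LinearMap.range (LieAlgebra.ad k L x))

/-- A Lie algebra has breadth type `S` if `S` is exactly the set of breadths of its elements. -/
def HasBreadthType (L : Type*) [LieRing L] [LieAlgebra k L] (S : Set ℕ) : Prop :=
  Set.range (breadth k L) = S

/-- The derived subalgebra `L' = [L, L]` as a Lie ideal. -/
abbrev derivedIdeal (L : Type*) [LieRing L] [LieAlgebra k L] : LieIdeal k L :=
  ⁅(⊤ : LieIdeal k L), (⊤ : LieIdeal k L)⁆

lemma lie_mem_derivedIdeal (L : Type*) [LieRing L] [LieAlgebra k L] (x y : L) :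
    ⁅x, y⁆ ∈ derivedIdeal k L :=
  LieSubmodule.lie_mem_lie (LieSubmodule.mem_top x) (LieSubmodule.mem_top y)

/-- A Camina Lie algebra: `[x, L] = L'` for every `x ∈ L \ L'`. -/
def IsCamina (L : Type*) [LieRing L] [LieAlgebra k L] : Prop :=
  ∀ x : L, x ∉ derivedIdeal k L →
    LinearMap.range (LieAlgebra.ad k L x) = (derivedIdeal k L).toSubmodule

/-- A Lie algebra is nilpotent of class exactly `c`. -/
def IsNilpotentOfClass (L : Type*) [LieRing L] [LieAlgebra k L] (c : ℕ) : Prop :=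
  LieModule.lowerCentralSeries k L L c = ⊥ ∧ ∀ b < c, LieModule.lowerCentralSeries k L L b ≠ ⊥

/-- A Lie algebra is minimally generated by `n` elements: some `n` elements generate it
and no fewer elements generate it. -/
def MinimallyGenerated (L : Type*) [LieRing L] [LieAlgebra k L] (n : ℕ) : Prop :=
  (∃ s : Finset L, s.card = n ∧ LieSubalgebra.lieSpan k L ↑s = ⊤) ∧
  ∀ s : Finset L, LieSubalgebra.lieSpan k L ↑s = ⊤ → n ≤ s.card

/-- The free `c`-step nilpotent Lie algebra on `n` generators: the quotient of the free
Lie algebra on `n` generators by the `(c+1)`-st term `γ_{c+1}` of its lower central series. -/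
abbrev FreeNilp (c n : ℕ) :=
  FreeLieAlgebra k (Fin n) ⧸
    LieModule.lowerCentralSeries k (FreeLieAlgebra k (Fin n)) (FreeLieAlgebra k (Fin n)) c

/-- The canonical generators of the free `c`-step nilpotent Lie algebra on `n` generators. -/
noncomputable def gen (c n : ℕ) (i : Fin n) : FreeNilp k c n :=
  LieSubmodule.Quotient.mk
    (N := LieModule.lowerCentralSeries k (FreeLieAlgebra k (Fin n)) (FreeLieAlgebra k (Fin n)) c)
    (FreeLieAlgebra.of k i)

end Defs

namespace BreadthConstruction

open Module

/-- Extend a tuple by zeros. -/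
def Emap (k : Type*) [Field k] (a b : ℕ) : (Fin a → k) →ₗ[k] (Fin b → k) where
  toFun f j := if h : (j : ℕ) < a then f ⟨j, h⟩ else 0
  map_add' f g := by funext j; by_cases h : (j : ℕ) < a <;> simp [h]
  map_smul' c f := by funext j; by_cases h : (j : ℕ) < a <;> simp [h]

lemma Emap_comp {k : Type*} [Field k] {a b c : ℕ} (hab : a ≤ b) (f : Fin a → k) :
    Emap k b c (Emap k a b f) = Emap k a c f := by
  funext j
  simp only [Emap, LinearMap.coe_mk, AddHom.coe_mk]
  by_cases h : (j : ℕ) < a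
  · rw [dif_pos (lt_of_lt_of_le h hab), dif_pos h]
  · by_cases hb : (j : ℕ) < b
    · rw [dif_pos hb, dif_neg h]
    · rw [dif_neg hb, dif_neg h]

lemma Emap_injective {k : Type*} [Field k] {a b : ℕ} (hab : a ≤ b) :
    Function.Injective (Emap k a b) := by
  intro f g h
  funext i
  have := congrFun h ⟨(i : ℕ), lt_of_lt_of_le i.2 hab⟩
  simpa [Emap, i.2] using this

variable (p : ℕ) [Fact p.Prime] (r : ℕ) (m : Fin (r + 1) → ℕ)

abbrev Gsp (i : Fin r) : Type := GaloisField p (m i.succ)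

abbrev Usp : Type := ∀ i : Fin r, Gsp p r m i × Gsp p r m i

abbrev Zsp : Type := Fin (m (Fin.last r)) → ZMod p

noncomputable def phi (i : Fin r) : Gsp p r m i →ₗ[ZMod p] (Fin (m i.succ) → ZMod p) :=
  if h : Module.finrank (ZMod p) (Gsp p r m i) = m i.succ then
    (LinearEquiv.ofFinrankEq _ _ (by rw [h, Module.finrank_fin_fun])).toLinearMap
  else 0

lemma m_succ_ne_zero (h0 : m 0 = 0) (hmono : StrictMono m) (i : Fin r) : m i.succ ≠ 0 := by
  have := hmono (show (0 : Fin (r + 1)) < i.succ from i.succ_pos)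
  omega

lemma phi_bijective (h0 : m 0 = 0) (hmono : StrictMono m) (i : Fin r) :
    Function.Bijective (phi p r m i) := by
  rw [phi, dif_pos (GaloisField.finrank p (m_succ_ne_zero r m h0 hmono i))]
  exact (LinearEquiv.ofFinrankEq _ _ _).bijective

noncomputable def iot (i : Fin r) : Gsp p r m i →ₗ[ZMod p] Zsp p r m :=
  (Emap (ZMod p) (m i.succ) (m (Fin.last r))).comp (phi p r m i)

lemma iot_injective (h0 : m 0 = 0) (hmono : StrictMono m) (i : Fin r) :
    Function.Injective (iot p r m i) :=
  (Emap_injective (hmono.monotone (Fin.le_last i.succ))).comp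
    (phi_bijective p r m h0 hmono i).injective

lemma iot_range_le (h0 : m 0 = 0) (hmono : StrictMono m) {i j : Fin r} (hij : i ≤ j) :
    LinearMap.range (iot p r m i) ≤ LinearMap.range (iot p r m j) := by
  rintro z ⟨g, rfl⟩
  obtain ⟨w, hw⟩ := (phi_bijective p r m h0 hmono j).surjective
    (Emap (ZMod p) (m i.succ) (m j.succ) (phi p r m i g))
  refine ⟨w, ?_⟩
  rw [iot, iot, LinearMap.comp_apply, LinearMap.comp_apply, hw,
    Emap_comp (hmono.monotone (Fin.succ_le_succ_iff.mpr hij))]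

lemma finrank_range_iot (h0 : m 0 = 0) (hmono : StrictMono m) (i : Fin r) :
    Module.finrank (ZMod p) (LinearMap.range (iot p r m i)) = m i.succ := by
  rw [LinearMap.finrank_range_of_inj (iot_injective p r m h0 hmono i),
    GaloisField.finrank p (m_succ_ne_zero r m h0 hmono i)]

noncomputable def Bmap : Usp p r m →ₗ[ZMod p] Usp p r m →ₗ[ZMod p] Zsp p r m :=
  LinearMap.mk₂ (ZMod p)
    (fun u v => ∑ i, iot p r m i ((u i).1 * (v i).2 - (u i).2 * (v i).1))
    (by
      intro u u' v
      rw [← Finset.sum_add_distrib]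
      refine Finset.sum_congr rfl fun i _ => ?_
      rw [← map_add]
      congr 1
      simp only [Pi.add_apply, Prod.fst_add, Prod.snd_add]
      ring)
    (by
      intro c u v
      rw [Finset.smul_sum]
      refine Finset.sum_congr rfl fun i _ => ?_
      rw [← map_smul]
      congr 1
      simp only [Pi.smul_apply, Prod.smul_fst, Prod.smul_snd, smul_sub, smul_mul_assoc])
    (by
      intro u v v'
      rw [← Finset.sum_add_distrib]
      refine Finset.sum_congr rfl fun i _ => ?_
      rw [← map_add]
      congr 1
      simp only [Pi.add_apply, Prod.fst_add, Prod.snd_add]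
      ring)
    (by
      intro c u v
      rw [Finset.smul_sum]
      refine Finset.sum_congr rfl fun i _ => ?_
      rw [← map_smul]
      congr 1
      simp only [Pi.smul_apply, Prod.smul_fst, Prod.smul_snd, smul_sub, mul_smul_comm])

def Lsp : Type := Usp p r m × Zsp p r m

noncomputable instance : AddCommGroup (Lsp p r m) :=
  inferInstanceAs (AddCommGroup (Usp p r m × Zsp p r m))

noncomputable instance : Module (ZMod p) (Lsp p r m) :=
  inferInstanceAs (Module (ZMod p) (Usp p r m × Zsp p r m))

instance : FiniteDimensional (ZMod p) (Lsp p r m) :=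
  inferInstanceAs (FiniteDimensional (ZMod p) (Usp p r m × Zsp p r m))

noncomputable instance : LieRing (Lsp p r m) :=
  { (inferInstance : AddCommGroup (Lsp p r m)) with
    bracket := fun x y => ((0, Bmap p r m x.1 y.1) : Usp p r m × Zsp p r m)
    add_lie := fun x y z => by
      show ((0, Bmap p r m (x.1 + y.1) z.1) : Usp p r m × Zsp p r m)
        = ((0, Bmap p r m x.1 z.1) : Usp p r m × Zsp p r m)
          + ((0, Bmap p r m y.1 z.1) : Usp p r m × Zsp p r m)
      simp [map_add, Prod.mk_add_mk]
    lie_add := fun x y z => by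
      show ((0, Bmap p r m x.1 (y.1 + z.1)) : Usp p r m × Zsp p r m)
        = ((0, Bmap p r m x.1 y.1) : Usp p r m × Zsp p r m)
          + ((0, Bmap p r m x.1 z.1) : Usp p r m × Zsp p r m)
      simp [map_add, Prod.mk_add_mk]
    lie_self := fun x => by
      show ((0, Bmap p r m x.1 x.1) : Usp p r m × Zsp p r m) = 0
      have : Bmap p r m x.1 x.1 = 0 := by
        rw [Bmap, LinearMap.mk₂_apply]
        refine Finset.sum_eq_zero fun i _ => ?_
        rw [mul_comm, sub_self, map_zero]
      rw [this]
      rfl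
    leibniz_lie := fun x y z => by
      show ((0, Bmap p r m x.1 (0 : Usp p r m)) : Usp p r m × Zsp p r m)
        = ((0, Bmap p r m (0 : Usp p r m) z.1) : Usp p r m × Zsp p r m)
          + ((0, Bmap p r m y.1 (0 : Usp p r m)) : Usp p r m × Zsp p r m)
      simp [Prod.mk_add_mk] }

noncomputable instance : LieAlgebra (ZMod p) (Lsp p r m) :=
  { lie_smul := fun t x y => by
      show ((0, Bmap p r m x.1 (t • y.1)) : Usp p r m × Zsp p r m)
        = t • ((0, Bmap p r m x.1 y.1) : Usp p r m × Zsp p r m)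
      rw [map_smul, Prod.smul_mk, smul_zero] }

def mkL (u : Usp p r m) (z : Zsp p r m) : Lsp p r m := (u, z)

lemma lie_def (x y : Lsp p r m) :
    ⁅x, y⁆ = ((0, Bmap p r m x.1 y.1) : Usp p r m × Zsp p r m) := rfl

noncomputable def inrL : Zsp p r m →ₗ[ZMod p] Lsp p r m :=
  LinearMap.inr (ZMod p) (Usp p r m) (Zsp p r m)

noncomputable def fstL : Lsp p r m →ₗ[ZMod p] Usp p r m :=
  LinearMap.fst (ZMod p) (Usp p r m) (Zsp p r m)

lemma ad_eq (x : Lsp p r m) :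
    (LieAlgebra.ad (ZMod p) (Lsp p r m) x : Lsp p r m →ₗ[ZMod p] Lsp p r m)
      = (inrL p r m).comp ((Bmap p r m x.1).comp (fstL p r m)) :=
  LinearMap.ext fun y => by rw [LieAlgebra.ad_apply]; rfl

lemma breadth_eq (x : Lsp p r m) :
    breadth (ZMod p) (Lsp p r m) x
      = Module.finrank (ZMod p) (LinearMap.range (Bmap p r m x.1)) := by
  have hfst : LinearMap.range (fstL p r m) = ⊤ :=
    LinearMap.range_eq_top.mpr (fun u => ⟨((u, 0) : Usp p r m × Zsp p r m), rfl⟩)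
  have hinj : Function.Injective (inrL p r m) := fun z z' h => congrArg Prod.snd h
  unfold breadth
  rw [ad_eq, ← LinearMap.comp_assoc, LinearMap.range_comp_of_range_eq_top _ hfst,
    LinearMap.range_comp]
  exact (LinearEquiv.finrank_eq
    (Submodule.equivMapOfInjective (inrL p r m) hinj _)).symm

lemma range_Bmap_of_ne (h0 : m 0 = 0) (hmono : StrictMono m) (u : Usp p r m) (i0 : Fin r)
    (h1 : u i0 ≠ 0) (h2 : ∀ j, u j ≠ 0 → j ≤ i0) :
    LinearMap.range (Bmap p r m u) = LinearMap.range (iot p r m i0) := by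
  apply le_antisymm
  · rintro z ⟨v, rfl⟩
    rw [Bmap, LinearMap.mk₂_apply]
    apply Submodule.sum_mem
    intro i _
    by_cases h : u i = 0
    · have h1' : (u i).1 = 0 := by rw [h]; rfl
      have h2' : (u i).2 = 0 := by rw [h]; rfl
      rw [h1', h2', zero_mul, zero_mul, sub_self, map_zero]
      exact Submodule.zero_mem _
    · exact iot_range_le p r m h0 hmono (h2 i h) ⟨_, rfl⟩
  · rintro z ⟨g, rfl⟩
    by_cases ha : (u i0).1 = 0
    · have hb : (u i0).2 ≠ 0 := by
        intro hb
        exact h1 (Prod.ext ha hb)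
      refine ⟨Pi.single i0 (-((u i0).2⁻¹ * g), 0), ?_⟩
      rw [Bmap, LinearMap.mk₂_apply, Finset.sum_eq_single i0]
      · rw [Pi.single_eq_same]
        congr 1
        simp only [ha, zero_mul, mul_neg, zero_sub, neg_neg, ← mul_assoc,
          mul_inv_cancel₀ hb, one_mul]
      · intro i _ hi
        rw [Pi.single_eq_of_ne hi]
        simp
      · intro h
        exact absurd (Finset.mem_univ i0) h
    · refine ⟨Pi.single i0 (0, (u i0).1⁻¹ * g), ?_⟩
      rw [Bmap, LinearMap.mk₂_apply, Finset.sum_eq_single i0]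
      · rw [Pi.single_eq_same]
        congr 1
        simp only [mul_zero, sub_zero, ← mul_assoc, mul_inv_cancel₀ ha, one_mul]
      · intro i _ hi
        rw [Pi.single_eq_of_ne hi]
        simp
      · intro h
        exact absurd (Finset.mem_univ i0) h

lemma breadth_of_ne (h0 : m 0 = 0) (hmono : StrictMono m) (x : Lsp p r m) (i0 : Fin r)
    (h1 : x.1 i0 ≠ 0) (h2 : ∀ j, x.1 j ≠ 0 → j ≤ i0) :
    breadth (ZMod p) (Lsp p r m) x = m i0.succ := by
  rw [breadth_eq, range_Bmap_of_ne p r m h0 hmono x.1 i0 h1 h2,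
    finrank_range_iot p r m h0 hmono]

lemma breadth_of_fst_eq_zero (x : Lsp p r m) (hx : x.1 = 0) :
    breadth (ZMod p) (Lsp p r m) x = 0 := by
  rw [breadth_eq, hx, map_zero, LinearMap.range_zero, finrank_bot]

lemma Bmap_single_pair (i0 : Fin r) (w w' : Gsp p r m i0 × Gsp p r m i0) :
    Bmap p r m (Pi.single i0 w) (Pi.single i0 w')
      = iot p r m i0 (w.1 * w'.2 - w.2 * w'.1) := by
  rw [Bmap, LinearMap.mk₂_apply, Finset.sum_eq_single i0]
  · rw [Pi.single_eq_same, Pi.single_eq_same]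
  · intro i _ hi
    rw [Pi.single_eq_of_ne hi, Pi.single_eq_of_ne hi]
    simp
  · intro h
    exact absurd (Finset.mem_univ i0) h

def Ksub : LieIdeal (ZMod p) (Lsp p r m) where
  carrier := {x : Lsp p r m | x.1 = 0}
  add_mem' := by
    intro a b ha hb
    simp only [Set.mem_setOf_eq] at ha hb ⊢
    show a.1 + b.1 = 0
    rw [ha, hb, add_zero]
  zero_mem' := rfl
  smul_mem' := by
    intro c x hx
    simp only [Set.mem_setOf_eq] at hx ⊢
    show c • x.1 = 0
    rw [hx, smul_zero]
  lie_mem := fun {x y} _ => rfl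

end BreadthConstruction

/-- for any odd prime `p` and any finite strictly increasing sequence
`0 = m_0 < m_1 < … < m_r` (with `r ≥ 1`), there exists a finite-dimensional 2-step
nilpotent Lie algebra over `F_p` of breadth type `(m_0, m_1, …, m_r)`. -/
theorem exists_two_step_nilpotent_of_breadth_type
    (p : ℕ) [Fact p.Prime] (hodd : p ≠ 2)
    (r : ℕ) (hr : 1 ≤ r) (m : Fin (r+1) → ℕ) (h0 : m 0 = 0) (hmono : StrictMono m) :
    ∃ (L : Type) (_ : LieRing L) (_ : LieAlgebra (ZMod p) L),
      FiniteDimensional (ZMod p) L ∧ IsNilpotentOfClass (ZMod p) L 2 ∧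
      HasBreadthType (ZMod p) L (Set.range m) := by
  classical
  open BreadthConstruction in
  refine ⟨Lsp p r m, inferInstance, inferInstance, inferInstance, ?_, ?_⟩
  · -- nilpotency class exactly 2
    have hj0 : (0 : ℕ) < r := hr
    set j0 : Fin r := ⟨0, hj0⟩
    constructor
    · -- lcs 2 = ⊥
      have hK : LieModule.lowerCentralSeries (ZMod p) (Lsp p r m) (Lsp p r m) 1
          ≤ Ksub p r m := by
        rw [show (1 : ℕ) = 0 + 1 from rfl, LieModule.lowerCentralSeries_succ,
          LieModule.lowerCentralSeries_zero]
        rw [LieSubmodule.lie_le_iff]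
        intro x _ y _
        exact rfl
      rw [show (2 : ℕ) = 1 + 1 from rfl, LieModule.lowerCentralSeries_succ]
      rw [← le_bot_iff, LieSubmodule.lie_le_iff]
      intro x _ y hy
      have hy1 : y.1 = 0 := hK hy
      rw [LieSubmodule.mem_bot, lie_def, hy1, map_zero]
      rfl
    · -- lower terms nonzero
      intro b hb
      interval_cases b
      · -- lcs 0 = ⊤ ≠ ⊥
        rw [LieModule.lowerCentralSeries_zero]
        intro htop
        have hN : 0 < m (Fin.last r) := by
          have : (0 : Fin (r+1)) < Fin.last r := by
            rw [Fin.lt_def]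
            simp only [Fin.val_zero, Fin.val_last]
            omega
          have := hmono this
          omega
        haveI : Nonempty (Fin (m (Fin.last r))) := Fin.pos_iff_nonempty.mp hN
        haveI : Nontrivial (Zsp p r m) := inferInstance
        haveI : Nontrivial (Lsp p r m) :=
          inferInstanceAs (Nontrivial (Usp p r m × Zsp p r m))
        obtain ⟨x, hx⟩ := exists_ne (0 : Lsp p r m)
        have : x ∈ (⊤ : LieSubmodule (ZMod p) (Lsp p r m) (Lsp p r m)) :=
          LieSubmodule.mem_top x
        rw [htop, LieSubmodule.mem_bot] at this
        exact hx this
      · -- lcs 1 ≠ ⊥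
        intro hbot
        have hval : Bmap p r m (Pi.single j0 ((1 : Gsp p r m j0), 0))
            (Pi.single j0 ((0 : Gsp p r m j0), 1)) = iot p r m j0 1 := by
          rw [Bmap_single_pair]
          norm_num
        have hlie : ⁅mkL p r m (Pi.single j0 ((1 : Gsp p r m j0), 0)) 0,
              mkL p r m (Pi.single j0 ((0 : Gsp p r m j0), 1)) 0⁆
            = mkL p r m 0 (iot p r m j0 1) := by
          rw [lie_def]
          exact congrArg (fun z => mkL p r m 0 z) hval
        have h1mem : mkL p r m 0 (iot p r m j0 1) ∈
            LieModule.lowerCentralSeries (ZMod p) (Lsp p r m) (Lsp p r m) 1 := by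
          rw [show (1 : ℕ) = 0 + 1 from rfl, LieModule.lowerCentralSeries_succ,
            LieModule.lowerCentralSeries_zero, ← hlie]
          exact LieSubmodule.lie_mem_lie (LieSubmodule.mem_top _) (LieSubmodule.mem_top _)
        rw [hbot, LieSubmodule.mem_bot] at h1mem
        have hz : (iot p r m j0 1 : Zsp p r m) = 0 := (Prod.ext_iff.mp h1mem).2
        rw [show (0 : Zsp p r m) = iot p r m j0 0 from (map_zero _).symm] at hz
        exact one_ne_zero (iot_injective p r m h0 hmono j0 hz)
  · -- breadth type
    ext b
    simp only [Set.mem_range]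
    constructor
    · rintro ⟨x, rfl⟩
      by_cases hx : x.1 = 0
      · exact ⟨0, by rw [h0, breadth_of_fst_eq_zero p r m x hx]⟩
      · have hex : ∃ i, x.1 i ≠ 0 := by
          by_contra h
          push_neg at h
          exact hx (funext fun i => h i)
        obtain ⟨i, hi⟩ := hex
        have hsne : (Finset.univ.filter (fun i => x.1 i ≠ 0)).Nonempty :=
          ⟨i, by simp [hi]⟩
        have h1 : x.1 ((Finset.univ.filter (fun i => x.1 i ≠ 0)).max' hsne) ≠ 0 :=
          (Finset.mem_filter.mp (Finset.max'_mem _ hsne)).2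
        have h2 : ∀ j, x.1 j ≠ 0 →
            j ≤ (Finset.univ.filter (fun i => x.1 i ≠ 0)).max' hsne :=
          fun j hj => Finset.le_max' _ j (by simp [hj])
        exact ⟨((Finset.univ.filter (fun i => x.1 i ≠ 0)).max' hsne).succ,
          (breadth_of_ne p r m h0 hmono x _ h1 h2).symm⟩
    · rintro ⟨i, rfl⟩
      rcases Fin.eq_zero_or_eq_succ i with hi | ⟨j, rfl⟩
      · refine ⟨0, ?_⟩
        rw [hi, h0]
        exact breadth_of_fst_eq_zero p r m 0 rfl
      · refine ⟨mkL p r m (Pi.single j ((1 : Gsp p r m j), 0)) 0, ?_⟩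
        apply breadth_of_ne p r m h0 hmono _ j
        · show (Pi.single j ((1 : Gsp p r m j), 0) : Usp p r m) j ≠ 0
          rw [Pi.single_eq_same]
          intro h
          exact one_ne_zero (Prod.ext_iff.mp h).1
        · intro j' hj'
          by_contra hle
          have hne : j' ≠ j := by
            intro h
            exact hle (le_of_eq h)
          exact hj' (show (Pi.single j ((1 : Gsp p r m j), 0) : Usp p r m) j' = 0 from
            Pi.single_eq_of_ne hne _)
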